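/- The supremum over w ∈ ℂ and unimodular c ∈ ℂ of |w - c| / |1 + |w-1| - c| equals √2; in particular, as t → 0, with w = 1 - it and c = e^{it}, the quotient |1 - e^{it} - it| / |1 - e^{it} + t| tends to √2. -/

import Mathlib

open Complex Filter

lemma key_tendsto :
    Filter.Tendsto
      (fun t : ℝ =>
        ‖1 - Complex.exp (Complex.I * t) - Complex.I * t‖ /
          ‖1 - Complex.exp (Complex.I * t) + (t : ℂ)‖)
      (nhdsWithin 0 {0}ᶜ) (nhds (Real.sqrt 2)) := by
  have h1 : HasDerivAt (fun t : ℝ => (t : ℂ)) 1 0 := by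
    simpa using (hasDerivAt_id (0:ℝ)).ofReal_comp
  have h2 : HasDerivAt (fun t : ℝ => Complex.I * (t : ℂ)) Complex.I 0 := by
    simpa using h1.const_mul Complex.I
  have h3 : HasDerivAt (fun t : ℝ => Complex.exp (Complex.I * t)) Complex.I 0 := by
    simpa using h2.cexp
  have hs : Tendsto (slope (fun t : ℝ => Complex.exp (Complex.I * t)) 0)
      (nhdsWithin 0 {0}ᶜ) (nhds Complex.I) := hasDerivAt_iff_tendsto_slope.mp h3
  have hF : Tendsto (fun t : ℝ => ((t:ℂ))⁻¹ * (1 - Complex.exp (Complex.I * t) - Complex.I * t))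
      (nhdsWithin 0 {0}ᶜ) (nhds (-2 * Complex.I)) := by
    have h := (hs.neg).sub (tendsto_const_nhds (x := Complex.I))
    have heq : (fun t : ℝ => -(slope (fun t : ℝ => Complex.exp (Complex.I * t)) 0 t) - Complex.I)
        =ᶠ[nhdsWithin 0 {0}ᶜ]
        (fun t : ℝ => ((t:ℂ))⁻¹ * (1 - Complex.exp (Complex.I * t) - Complex.I * t)) := by
      filter_upwards [self_mem_nhdsWithin] with t ht
      have ht' : (t:ℂ) ≠ 0 := by exact_mod_cast Complex.ofReal_ne_zero.mpr ht
      have ht0 : t ≠ 0 := ht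
      rw [slope_def_module]
      simp only [Complex.ofReal_zero, mul_zero, Complex.exp_zero, Complex.real_smul, Complex.ofReal_inv]
      field_simp
      rw [sub_zero, mul_sub, mul_neg, mul_div_cancel₀ _ ht']
      ring
    have : -Complex.I - Complex.I = -2 * Complex.I := by ring
    rw [this] at h
    exact h.congr' heq
  have hG : Tendsto (fun t : ℝ => ((t:ℂ))⁻¹ * (1 - Complex.exp (Complex.I * t) + (t:ℂ)))
      (nhdsWithin 0 {0}ᶜ) (nhds (1 - Complex.I)) := by
    have h := (hs.neg).add (tendsto_const_nhds (x := (1:ℂ)))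
    have heq : (fun t : ℝ => -(slope (fun t : ℝ => Complex.exp (Complex.I * t)) 0 t) + 1)
        =ᶠ[nhdsWithin 0 {0}ᶜ]
        (fun t : ℝ => ((t:ℂ))⁻¹ * (1 - Complex.exp (Complex.I * t) + (t:ℂ))) := by
      filter_upwards [self_mem_nhdsWithin] with t ht
      have ht' : (t:ℂ) ≠ 0 := by exact_mod_cast Complex.ofReal_ne_zero.mpr ht
      have ht0 : t ≠ 0 := ht
      rw [slope_def_module]
      simp only [Complex.ofReal_zero, mul_zero, Complex.exp_zero, Complex.real_smul, Complex.ofReal_inv]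
      field_simp
      rw [sub_zero, mul_add, mul_neg, mul_div_cancel₀ _ ht']
      ring
    have : -Complex.I + 1 = 1 - Complex.I := by ring
    rw [this] at h
    exact h.congr' heq
  have h2' : ‖(1:ℂ) - Complex.I‖ = Real.sqrt 2 := by
    rw [Complex.norm_def, Complex.normSq_apply]
    norm_num
  have hne : ‖(1 : ℂ) - Complex.I‖ ≠ 0 := by
    rw [h2']; positivity
  have hdiv := (hF.norm).div (hG.norm) hne
  have hval : ‖(-2 : ℂ) * Complex.I‖ / ‖(1:ℂ) - Complex.I‖ = Real.sqrt 2 := by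
    have h1 : ‖(-2 : ℂ) * Complex.I‖ = 2 := by simp
    rw [h1, h2']
    rw [div_eq_iff (by rw [h2'] at hne; exact hne)]
    exact (Real.mul_self_sqrt (by norm_num)).symm
  rw [hval] at hdiv
  apply hdiv.congr'
  filter_upwards [self_mem_nhdsWithin] with t ht
  have ht0 : t ≠ 0 := ht
  have ht' : ‖((t:ℂ))⁻¹‖ ≠ 0 := by
    simpa using ht0
  simp only [Pi.div_apply, norm_mul]
  rw [mul_div_mul_left _ _ ht']

theorem stmt_3 :
    sSup {r : ℝ | ∃ w c : ℂ, ‖c‖ = 1 ∧ ((1 + ‖w - 1‖ : ℝ) : ℂ) - c ≠ 0 ∧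
        r = ‖w - c‖ / ‖((1 + ‖w - 1‖ : ℝ) : ℂ) - c‖} = Real.sqrt 2 ∧
    Filter.Tendsto
      (fun t : ℝ =>
        ‖1 - Complex.exp (Complex.I * t) - Complex.I * t‖ /
          ‖1 - Complex.exp (Complex.I * t) + (t : ℂ)‖)
      (nhdsWithin 0 {0}ᶜ) (nhds (Real.sqrt 2)) := by
  refine ⟨?_, key_tendsto⟩
  apply csSup_eq_of_forall_le_of_forall_lt_exists_gt
  · refine ⟨1, 1, -1, by simp, by norm_num, by norm_num⟩
  · rintro r ⟨w, c, hc, hne, rfl⟩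
    set R := ‖w - 1‖ with hR
    set s := ‖(1 : ℂ) - c‖ with hs
    set D := ‖((1 + R : ℝ) : ℂ) - c‖ with hD
    have hDpos : 0 < D := norm_pos_iff.mpr hne
    have hRnn : 0 ≤ R := norm_nonneg _
    have hsnn : 0 ≤ s := norm_nonneg _
    have htri : ‖w - c‖ ≤ R + s := by
      calc ‖w - c‖ = ‖(w - 1) + (1 - c)‖ := by ring_nf
        _ ≤ R + s := norm_add_le _ _
    have hc2 : c.re ^ 2 + c.im ^ 2 = 1 := by
      have hns : Complex.normSq c = 1 := by
        rw [Complex.normSq_eq_norm_sq, hc]; norm_num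
      simpa [Complex.normSq_apply, sq] using hns
    have hs2 : s ^ 2 = (1 - c.re) ^ 2 + c.im ^ 2 := by
      rw [hs, Complex.sq_norm, Complex.normSq_apply]
      simp [sq]
    have hD2 : D ^ 2 = (1 + R - c.re) ^ 2 + c.im ^ 2 := by
      rw [hD, Complex.sq_norm, Complex.normSq_apply]
      simp [sq]
    have hkey : (R + s) ^ 2 ≤ 2 * D ^ 2 := by
      nlinarith [sq_nonneg (R - s), mul_nonneg hRnn (sq_nonneg s), sq_nonneg s, sq_nonneg c.im]
    have hle : R + s ≤ Real.sqrt 2 * D := by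
      have h1 := Real.sqrt_le_sqrt hkey
      rwa [Real.sqrt_sq (by linarith), Real.sqrt_mul (by norm_num), Real.sqrt_sq hDpos.le] at h1
    rw [div_le_iff₀ hDpos]
    exact htri.trans hle
  · intro b hb
    have hmono : nhdsWithin (0:ℝ) (Set.Ioi 0) ≤ nhdsWithin 0 {0}ᶜ :=
      nhdsWithin_mono 0 (fun x hx => ne_of_gt hx)
    have h := (key_tendsto.mono_left hmono).eventually (eventually_gt_nhds hb)
    have h2 : ∀ᶠ t : ℝ in nhdsWithin 0 (Set.Ioi 0), 0 < t := self_mem_nhdsWithin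
    obtain ⟨t, hbt, ht⟩ := (h.and h2).exists
    refine ⟨_, ⟨1 - Complex.I * t, Complex.exp (Complex.I * t), ?_, ?_, rfl⟩, ?_⟩
    · rw [Complex.norm_exp]
      simp
    · intro habs
      rw [sub_eq_zero] at habs
      have h1 : ‖((1 + ‖(1 - Complex.I * t) - 1‖ : ℝ) : ℂ)‖ = 1 + t := by
        have : ‖(1 - Complex.I * t) - 1‖ = t := by
          simp [norm_mul, abs_of_pos ht]
        rw [this, Complex.norm_real]
        rw [Real.norm_eq_abs, abs_of_pos (by linarith)]
      have h2 : ‖Complex.exp (Complex.I * t)‖ = 1 := by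
        rw [Complex.norm_exp]; simp
      rw [habs, h2] at h1
      linarith
    · have hnorm1 : ‖(1 - Complex.I * t) - 1‖ = t := by
        simp [norm_mul, abs_of_pos ht]
      have he1 : ((1 - Complex.I * t) : ℂ) - Complex.exp (Complex.I * t)
          = 1 - Complex.exp (Complex.I * t) - Complex.I * t := by ring
      have he2 : ((1 + ‖(1 - Complex.I * t) - 1‖ : ℝ) : ℂ) - Complex.exp (Complex.I * t)
          = 1 - Complex.exp (Complex.I * t) + (t : ℂ) := by
        rw [hnorm1]; push_cast; ring
      rw [he1, he2]
      exact hbt
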